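/- Let φ be a matter density, and for b ∈ (0,1] and α ∈ [0,1] let θ_{b,α} denote the unique smooth, everywhere positive solution of θ_{b,α}^α·Δθ_{b,α} = −4πκ·φ on ℝ³ with θ_{b,α}(x) → b as |x| → ∞ satisfying the decay conditions at level b. Then for all 0 < b < s ≤ 1, all α ∈ [0,1], and all x ∈ ℝ³, one has 0 ≤ θ_{s,α}(x) − θ_{b,α}(x) ≤ s − b. -/

import Mathlib

open MeasureTheory Filter Metric Set

noncomputable section

abbrev E3 : Type := EuclideanSpace ℝ (Fin 3)

/-- The Euclidean Laplacian on `ℝ³`. -/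
def lap (u : E3 → ℝ) (x : E3) : ℝ :=
  ∑ i : Fin 3, fderiv ℝ (fun y => fderiv ℝ u y (EuclideanSpace.single i 1)) x
    (EuclideanSpace.single i 1)

/-- `u` satisfies the decay conditions at level `b`: for every (order of a) multi-index `k`
there is a constant `C` such that `|∂^l (u - b)| ≤ C · |x| ^ (-1 - k)` for all large `|x|`. -/
def DecayAt (b : ℝ) (u : E3 → ℝ) : Prop :=
  ∀ k : ℕ, ∃ C R : ℝ, ∀ x : E3, R ≤ ‖x‖ →
    ‖iteratedFDeriv ℝ k (fun y => u y - b) x‖ ≤ C * ‖x‖ ^ (-1 - (k : ℝ))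

/-- A matter density: smooth, compactly supported, nonnegative, not identically zero. -/
def IsMatterDensity (φ : E3 → ℝ) : Prop :=
  ContDiff ℝ (⊤ : ℕ∞) φ ∧ HasCompactSupport φ ∧ (∀ x, 0 ≤ φ x) ∧ φ ≠ 0


/-- `θ` solves the Generalized Poisson Problem with interactivity parameter `α` and
asymptotic boundary value `b`. -/
def IsGPPSolB (κ α b : ℝ) (φ θ : E3 → ℝ) : Prop :=
  ContDiff ℝ (⊤ : ℕ∞) θ ∧ (∀ x, 0 < θ x) ∧
    (∀ x, θ x ^ α * lap θ x = -(4 * Real.pi * κ) * φ x) ∧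
    Tendsto θ (cocompact E3) (nhds b)

/-! ### Auxiliary lemmas -/

lemma contDiff_fderiv_apply {f : E3 → ℝ} (hf : ContDiff ℝ (⊤:ℕ∞) f) (e : E3) :
    ContDiff ℝ (⊤:ℕ∞) (fun y => fderiv ℝ f y e) := by
  have h1 : ContDiff ℝ (⊤:ℕ∞) (fderiv ℝ f) := hf.fderiv_right (by exact_mod_cast le_top)
  exact (ContinuousLinearMap.apply ℝ ℝ e).contDiff.comp h1

lemma diffA {f : E3 → ℝ} (hf : ContDiff ℝ (⊤:ℕ∞) f) (x : E3) : DifferentiableAt ℝ f x :=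
  (hf.differentiable (by simp)) x

/-- Second derivative test, 1d version. -/
lemma second_deriv_nonpos_1d {g g' : ℝ → ℝ} {d : ℝ} (hg : Continuous g)
    (hg' : ∀ t, HasDerivAt g (g' t) t) (hd : HasDerivAt g' d 0)
    (h : IsLocalMax g 0) : d ≤ 0 := by
  by_contra hpos
  push_neg at hpos
  have hd1 : g' 0 = 0 := h.hasDerivAt_eq_zero (hg' 0)
  have hslope := hasDerivAt_iff_tendsto_slope.mp hd
  have hev : ∀ᶠ t in nhdsWithin (0:ℝ) (Set.Ioi 0), 0 < g' t := by
    have h1 : ∀ᶠ t in nhdsWithin (0:ℝ) ({0}ᶜ), 0 < slope g' 0 t :=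
      hslope.eventually (eventually_gt_nhds hpos)
    have h2 : ∀ᶠ t in nhdsWithin (0:ℝ) (Set.Ioi 0), 0 < slope g' 0 t :=
      h1.filter_mono (nhdsWithin_mono 0 (fun t (ht : t ∈ Set.Ioi 0) => ne_of_gt ht))
    have h3 : ∀ᶠ t in nhdsWithin (0:ℝ) (Set.Ioi 0), 0 < t := self_mem_nhdsWithin
    filter_upwards [h2, h3] with t h2 h3
    have hs : slope g' 0 t = g' t / t := by
      simp [slope, hd1, div_eq_inv_mul]
    rw [hs] at h2
    have := mul_pos h2 h3
    rwa [div_mul_cancel₀ _ (ne_of_gt h3)] at this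
  obtain ⟨u, hu, hIoo⟩ := mem_nhdsGT_iff_exists_Ioo_subset.mp hev
  obtain ⟨δ, hδ, hmax⟩ := Metric.eventually_nhds_iff.mp h
  have hu0 : (0:ℝ) < u := hu
  set t0 := min u δ / 2 with ht0
  have ht0pos : 0 < t0 := by
    have := lt_min hu0 hδ
    positivity
  have hderiv : ∀ t, deriv g t = g' t := fun t => (hg' t).deriv
  have hmono : StrictMonoOn g (Set.Icc 0 t0) := by
    apply strictMonoOn_of_deriv_pos (convex_Icc 0 t0) hg.continuousOn
    intro t ht
    rw [interior_Icc] at ht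
    rw [hderiv]
    apply hIoo
    constructor
    · exact ht.1
    · calc t < t0 := ht.2
        _ < u := by
          have : min u δ ≤ u := min_le_left u δ
          simp only [ht0]; linarith
  have hlt : g 0 < g t0 := hmono (Set.left_mem_Icc.mpr (le_of_lt ht0pos))
    (Set.right_mem_Icc.mpr (le_of_lt ht0pos)) ht0pos
  have : g t0 ≤ g 0 := by
    apply hmax
    rw [Real.dist_eq, sub_zero, abs_of_pos ht0pos]
    have : min u δ ≤ δ := min_le_right u δ
    simp only [ht0]; linarith
  linarith

/-- Second derivative test: at a local max of a smooth function every second directional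
derivative is nonpositive. -/
lemma secondDirDeriv_nonpos {f : E3 → ℝ} (hf : ContDiff ℝ (⊤:ℕ∞) f)
    {x0 : E3} (h : IsLocalMax f x0) (e : E3) :
    fderiv ℝ (fun y => fderiv ℝ f y e) x0 e ≤ 0 := by
  set L : ℝ → E3 := fun t => x0 + t • e with hLdef
  have hL0 : L 0 = x0 := by simp [hLdef]
  have hLder : ∀ t : ℝ, HasDerivAt L e t := by
    intro t
    have h1 : HasDerivAt (fun t : ℝ => t • e) ((1:ℝ) • e) t := (hasDerivAt_id t).smul_const e
    rw [one_smul] at h1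
    exact h1.const_add x0
  have hLcont : Continuous L := by
    have : ∀ t, ContinuousAt L t := fun t => (hLder t).continuousAt
    exact continuous_iff_continuousAt.mpr this
  set F : E3 → ℝ := fun y => fderiv ℝ f y e with hFdef
  have hg' : ∀ t, HasDerivAt (fun t => f (L t)) (F (L t)) t := fun t =>
    ((diffA hf (L t)).hasFDerivAt).comp_hasDerivAt t (hLder t)
  have hF : ContDiff ℝ (⊤:ℕ∞) F := contDiff_fderiv_apply hf e
  have hd : HasDerivAt (fun t => F (L t)) (fderiv ℝ F x0 e) 0 := by
    have := ((diffA hF (L 0)).hasFDerivAt).comp_hasDerivAt 0 (hLder 0)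
    rwa [hL0] at this
  have hmax : IsLocalMax (fun t => f (L t)) 0 := by
    have htend : Tendsto L (nhds 0) (nhds x0) := by
      rw [← hL0]; exact hLcont.continuousAt
    have : ∀ᶠ t in nhds (0:ℝ), f (L t) ≤ f x0 := htend.eventually h
    simpa [IsLocalMax, IsMaxFilter, hL0] using this
  exact second_deriv_nonpos_1d (hf.continuous.comp hLcont) hg' hd hmax

lemma lap_sub {f g : E3 → ℝ} (hf : ContDiff ℝ (⊤:ℕ∞) f) (hg : ContDiff ℝ (⊤:ℕ∞) g) (x : E3) :
    lap (fun y => f y - g y) x = lap f x - lap g x := by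
  unfold lap
  rw [← Finset.sum_sub_distrib]
  apply Finset.sum_congr rfl
  intro i _
  set e := EuclideanSpace.single i (1:ℝ)
  have h1 : (fun y => fderiv ℝ (fun z => f z - g z) y e)
      = fun y => fderiv ℝ f y e - fderiv ℝ g y e := by
    funext y
    rw [fderiv_fun_sub (diffA hf y) (diffA hg y)]
    rfl
  rw [h1, fderiv_fun_sub (diffA (contDiff_fderiv_apply hf e) x)
    (diffA (contDiff_fderiv_apply hg e) x)]
  rfl

lemma lap_sub_const {f : E3 → ℝ} (c : ℝ) (x : E3) :
    lap (fun y => f y - c) x = lap f x := by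
  unfold lap
  apply Finset.sum_congr rfl
  intro i _
  have h1 : (fun y => fderiv ℝ (fun z => f z - c) y (EuclideanSpace.single i (1:ℝ)))
      = fun y => fderiv ℝ f y (EuclideanSpace.single i (1:ℝ)) := by
    funext y
    rw [fderiv_sub_const]
  rw [h1]

lemma lap_exp_coord (ε : ℝ) (x : E3) :
    lap (fun y => ε * Real.exp (y 0)) x = ε * Real.exp (x 0) := by
  have hproj : ∀ y : E3, HasFDerivAt (fun y : E3 => ε * Real.exp (y 0))
      ((ε * Real.exp (y 0)) • (EuclideanSpace.proj (0 : Fin 3) : E3 →L[ℝ] ℝ)) y := by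
    intro y
    have h1 : HasDerivAt (fun t : ℝ => ε * Real.exp t) (ε * Real.exp (y 0)) (y 0) :=
      (Real.hasDerivAt_exp (y 0)).const_mul ε
    have h2 : HasFDerivAt (fun y : E3 => y 0) (EuclideanSpace.proj (0 : Fin 3) : E3 →L[ℝ] ℝ) y :=
      (EuclideanSpace.proj (0 : Fin 3) : E3 →L[ℝ] ℝ).hasFDerivAt
    have h3 := h1.comp_hasFDerivAt y h2
    exact h3
  have hc : ∀ i : Fin 3, (EuclideanSpace.proj (0 : Fin 3) : E3 →L[ℝ] ℝ)
      (EuclideanSpace.single i (1:ℝ)) = if (0 : Fin 3) = i then (1:ℝ) else 0 := by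
    intro i
    simp [EuclideanSpace.single_apply]
  unfold lap
  have hterm : ∀ i : Fin 3,
      fderiv ℝ (fun y => fderiv ℝ (fun z : E3 => ε * Real.exp (z 0)) y
        (EuclideanSpace.single i 1)) x (EuclideanSpace.single i 1)
      = (if (0 : Fin 3) = i then (1:ℝ) else 0) * ((ε * Real.exp (x 0)) *
          (if (0 : Fin 3) = i then (1:ℝ) else 0)) := by
    intro i
    set c : ℝ := if (0 : Fin 3) = i then (1:ℝ) else 0 with hcdef
    have h1 : (fun y => fderiv ℝ (fun z : E3 => ε * Real.exp (z 0)) y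
        (EuclideanSpace.single i 1)) = fun y => c * (ε * Real.exp (y 0)) := by
      funext y
      rw [(hproj y).fderiv]
      simp only [ContinuousLinearMap.coe_smul', Pi.smul_apply, smul_eq_mul]
      rw [hc i, ← hcdef]
      ring
    rw [h1]
    have h2 : HasFDerivAt (fun y : E3 => c * (ε * Real.exp (y 0)))
        (c • ((ε * Real.exp (x 0)) • (EuclideanSpace.proj (0 : Fin 3) : E3 →L[ℝ] ℝ))) x :=
      (hproj x).const_smul c
    rw [h2.fderiv]
    simp only [ContinuousLinearMap.coe_smul', Pi.smul_apply, smul_eq_mul]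
    rw [hc i, ← hcdef]
  rw [Finset.sum_congr rfl (fun i _ => hterm i)]
  rw [Fin.sum_univ_three]
  rw [if_pos rfl, if_neg (by decide : ¬ ((0:Fin 3) = 1)), if_neg (by decide : ¬ ((0:Fin 3) = 2))]
  ring

lemma lap_add_exp {v : E3 → ℝ} (hv : ContDiff ℝ (⊤:ℕ∞) v) (ε : ℝ) (x : E3) :
    lap (fun y => v y + ε * Real.exp (y 0)) x = lap v x + ε * Real.exp (x 0) := by
  have hexp : ContDiff ℝ (⊤:ℕ∞) (fun y : E3 => ε * Real.exp (y 0)) := by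
    apply ContDiff.mul contDiff_const
    exact Real.contDiff_exp.comp ((EuclideanSpace.proj (0 : Fin 3) : E3 →L[ℝ] ℝ).contDiff)
  have h := lap_sub (f := fun y => v y + ε * Real.exp (y 0)) (g := fun y => ε * Real.exp (y 0))
    (hv.add hexp) hexp x
  simp only [add_sub_cancel_right] at h
  rw [lap_exp_coord] at h
  linarith [lap_exp_coord ε x]

lemma abs_coord_le (y : E3) : |y 0| ≤ ‖y‖ := by
  rw [EuclideanSpace.norm_eq, ← Real.sqrt_sq_eq_abs]
  apply Real.sqrt_le_sqrt
  have h := Finset.single_le_sum (f := fun i => ‖y i‖^2) (fun i _ => sq_nonneg _)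
    (Finset.mem_univ (0 : Fin 3))
  simpa [Real.norm_eq_abs, sq_abs] using h

/-- The maximum principle we need: a smooth function which tends to a nonpositive limit at
infinity and which has nonnegative Laplacian wherever it is positive, is nonpositive. -/
lemma max_principle {v : E3 → ℝ} (hv : ContDiff ℝ (⊤:ℕ∞) v) {L : ℝ} (hL : L ≤ 0)
    (hlim : Tendsto v (cocompact E3) (nhds L))
    (hsub : ∀ x, 0 < v x → 0 ≤ lap v x) (p : E3) : v p ≤ 0 := by
  by_contra hp
  push_neg at hp
  set m := v p with hm
  have hm2 : (0:ℝ) < m / 2 := by linarith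
  have hIio : Set.Iio (m/2) ∈ nhds L := Iio_mem_nhds (by linarith)
  obtain ⟨K, hK, hKc⟩ := mem_cocompact.mp (hlim hIio)
  obtain ⟨R0, hR0⟩ := hK.isBounded.subset_closedBall 0
  set R := max R0 ‖p‖ + 1 with hR
  have hRpos : 0 < R := by
    have h1 : (0:ℝ) ≤ ‖p‖ := norm_nonneg p
    have h2 : ‖p‖ ≤ max R0 ‖p‖ := le_max_right _ _
    simp only [hR]; linarith
  have hKball : K ⊆ ball 0 R := by
    intro y hy
    have h1 : ‖y‖ ≤ R0 := by
      have := hR0 hy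
      rwa [mem_closedBall, dist_zero_right] at this
    rw [mem_ball, dist_zero_right]
    have h2 : R0 ≤ max R0 ‖p‖ := le_max_left _ _
    simp only [hR]; linarith
  have hpball : p ∈ closedBall (0:E3) R := by
    rw [mem_closedBall, dist_zero_right]
    have : ‖p‖ ≤ max R0 ‖p‖ := le_max_right _ _
    simp only [hR]; linarith
  set ε := (m/2) * Real.exp (-R) with hε
  have hεpos : 0 < ε := by positivity
  set w : E3 → ℝ := fun y => v y + ε * Real.exp (y 0) with hw
  have hexp : ContDiff ℝ (⊤:ℕ∞) (fun y : E3 => ε * Real.exp (y 0)) := by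
    apply ContDiff.mul contDiff_const
    exact Real.contDiff_exp.comp ((EuclideanSpace.proj (0 : Fin 3) : E3 →L[ℝ] ℝ).contDiff)
  have hwsm : ContDiff ℝ (⊤:ℕ∞) w := hv.add hexp
  obtain ⟨x0, hx0mem, hx0max⟩ := (isCompact_closedBall (0:E3) R).exists_isMaxOn
    ⟨p, hpball⟩ hwsm.continuous.continuousOn
  have hexpbd : ∀ y : E3, y ∈ closedBall (0:E3) R → ε * Real.exp (y 0) ≤ m / 2 := by
    intro y hy
    rw [mem_closedBall, dist_zero_right] at hy
    have h1 : y 0 ≤ R := le_trans (le_trans (le_abs_self _) (abs_coord_le y)) hy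
    have h2 : Real.exp (y 0) ≤ Real.exp R := Real.exp_le_exp.mpr h1
    calc ε * Real.exp (y 0) ≤ ε * Real.exp R := by nlinarith [Real.exp_pos (y 0)]
      _ = m/2 * (Real.exp (-R) * Real.exp R) := by rw [hε]; ring
      _ = m/2 := by rw [← Real.exp_add]; simp
  have hwp : m < w p := by
    have : 0 < ε * Real.exp (p 0) := by positivity
    simp only [hw]; linarith
  have hout : ∀ y ∈ closedBall (0:E3) R, y ∉ K → w y < w p := by
    intro y hy hyK
    have h1 : v y < m/2 := hKc hyK
    have h2 := hexpbd y hy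
    have : w y < m := by simp only [hw]; linarith
    linarith
  have hx0K : x0 ∈ K := by
    by_contra hx0K
    exact absurd (hx0max hpball) (not_le.mpr (hout x0 hx0mem hx0K))
  have hx0ball : x0 ∈ ball (0:E3) R := hKball hx0K
  have hlocmax : IsLocalMax w x0 := by
    apply Filter.eventually_of_mem (isOpen_ball.mem_nhds hx0ball)
    intro y hy
    exact hx0max (ball_subset_closedBall hy)
  have hvx0 : 0 < v x0 := by
    have h1 : w p ≤ w x0 := hx0max hpball
    have h2 := hexpbd x0 (ball_subset_closedBall hx0ball)
    have h3 : v x0 = w x0 - ε * Real.exp (x0 0) := by simp [hw]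
    rw [h3]
    linarith
  have hlapv := hsub x0 hvx0
  have hlapw : lap w x0 = lap v x0 + ε * Real.exp (x0 0) := lap_add_exp hv ε x0
  have hle : lap w x0 ≤ 0 := by
    apply Finset.sum_nonpos
    intro i _
    exact secondDirDeriv_nonpos hwsm hlocmax _
  have : 0 < lap w x0 := by
    rw [hlapw]
    have : 0 < ε * Real.exp (x0 0) := by positivity
    linarith
  linarith

theorem gpp_monotonicity_in_b (κ : ℝ) (hκ : 0 < κ)
    (φ : E3 → ℝ) (hφ : IsMatterDensity φ) (θ : ℝ → ℝ → E3 → ℝ)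
    (hθ : ∀ b ∈ Ioc (0 : ℝ) 1, ∀ α ∈ Icc (0 : ℝ) 1,
      IsGPPSolB κ α b φ (θ b α) ∧ DecayAt b (θ b α)) :
    ∀ b s α : ℝ, 0 < b → b < s → s ≤ 1 → α ∈ Icc (0 : ℝ) 1 → ∀ x : E3,
      0 ≤ θ s α x - θ b α x ∧ θ s α x - θ b α x ≤ s - b := by
  intro b s α hb hbs hs1 hα x
  obtain ⟨⟨hbsm, hbpos, hbeq, hblim⟩, -⟩ :=
    hθ b ⟨hb, le_of_lt (lt_of_lt_of_le hbs hs1)⟩ α hα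
  obtain ⟨⟨hssm, hspos, hseq, hslim⟩, -⟩ := hθ s ⟨lt_trans hb hbs, hs1⟩ α hα
  have hα0 : 0 ≤ α := hα.1
  have hφnn := hφ.2.2.1
  set C := 4 * Real.pi * κ with hC
  have hCpos : 0 < C := by
    have := Real.pi_pos
    positivity
  have hlapb : ∀ y, lap (θ b α) y = -(C * φ y / θ b α y ^ α) := by
    intro y
    have h := hbeq y
    have hpow : (0:ℝ) < θ b α y ^ α := Real.rpow_pos_of_pos (hbpos y) α
    have hgoal : lap (θ b α) y = -(C * φ y) / θ b α y ^ α := by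
      rw [eq_div_iff (ne_of_gt hpow)]
      linear_combination h
    rw [neg_div] at hgoal
    exact hgoal
  have hlaps : ∀ y, lap (θ s α) y = -(C * φ y / θ s α y ^ α) := by
    intro y
    have h := hseq y
    have hpow : (0:ℝ) < θ s α y ^ α := Real.rpow_pos_of_pos (hspos y) α
    have hgoal : lap (θ s α) y = -(C * φ y) / θ s α y ^ α := by
      rw [eq_div_iff (ne_of_gt hpow)]
      linear_combination h
    rw [neg_div] at hgoal
    exact hgoal
  have key1 : θ b α x - θ s α x ≤ 0 := by
    apply max_principle (L := b - s) (hbsm.sub hssm) (by linarith) (hblim.sub hslim)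
    intro y hy
    have hle : θ s α y ≤ θ b α y := by linarith
    have hps := hspos y
    have hpow : θ s α y ^ α ≤ θ b α y ^ α := Real.rpow_le_rpow (le_of_lt hps) hle hα0
    have hpows : (0:ℝ) < θ s α y ^ α := Real.rpow_pos_of_pos hps α
    have hdiv : C * φ y / θ b α y ^ α ≤ C * φ y / θ s α y ^ α := by
      gcongr
      exact mul_nonneg (le_of_lt hCpos) (hφnn y)
    rw [lap_sub hbsm hssm, hlapb y, hlaps y]
    linarith
  have key2 : θ s α x - θ b α x - (s - b) ≤ 0 := by
    apply max_principle (L := (0:ℝ)) ((hssm.sub hbsm).sub contDiff_const) le_rfl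
    · have h := (hslim.sub hblim).sub (tendsto_const_nhds (x := s - b)
        (f := cocompact E3))
      simpa using h
    · intro y hy
      have hle : θ b α y ≤ θ s α y := by
        have hy' : 0 < θ s α y - θ b α y - (s - b) := hy
        linarith
      have hpb := hbpos y
      have hpow : θ b α y ^ α ≤ θ s α y ^ α := Real.rpow_le_rpow (le_of_lt hpb) hle hα0
      have hpowb : (0:ℝ) < θ b α y ^ α := Real.rpow_pos_of_pos hpb α
      have hdiv : C * φ y / θ s α y ^ α ≤ C * φ y / θ b α y ^ α := by
        gcongr
        exact mul_nonneg (le_of_lt hCpos) (hφnn y)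
      have hrw : lap (fun z => θ s α z - θ b α z - (s - b)) y
          = lap (θ s α) y - lap (θ b α) y := by
        rw [lap_sub_const (f := fun z => θ s α z - θ b α z) (s - b) y,
          lap_sub hssm hbsm]
      rw [hrw, hlapb y, hlaps y]
      linarith
  exact ⟨by linarith, by linarith⟩

end
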